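/- arXiv:1311.6560 — 3 statements merged into one kernel-verified Lean document; each statement's English description precedes it below -/
import Mathlib

section
/- Let P be a poset with least element 0 and Z(P)^× ≠ ∅. Then the diameter of the reduced zero-divisor graph Γ_E(P) equals 3 if and only if the diameter of the zero-divisor graph Γ(P) equals 3. -/
/-- `L(x,y) = {z : z ≤ x ∧ z ≤ y}`, where the least element `0` of the poset is `⊥`. -/
def LSet (P : Type*) [PartialOrder P] [OrderBot P] (x y : P) : Set P := {z | z ≤ x ∧ z ≤ y}

theorem LSet_comm (P : Type*) [PartialOrder P] [OrderBot P] (x y : P) :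
    LSet P x y = LSet P y x := by
  ext z; exact ⟨fun h => ⟨h.2, h.1⟩, fun h => ⟨h.2, h.1⟩⟩

/-- The annihilator of `x`: `ann(x) = {y : L(x,y) = {0}}`. -/
def ann (P : Type*) [PartialOrder P] [OrderBot P] (x : P) : Set P := {y | LSet P x y = {⊥}}

theorem mem_ann_comm (P : Type*) [PartialOrder P] [OrderBot P] (x y : P) :
    y ∈ ann P x ↔ x ∈ ann P y := by
  simp only [ann, Set.mem_setOf_eq, LSet_comm P x y]

/-- The set `Z(P)^× = Z(P) \ {0}` of nonzero zero-divisors of `P`. -/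
def ZDivX (P : Type*) [PartialOrder P] [OrderBot P] : Set P :=
  {x | x ≠ ⊥ ∧ ∃ y : P, y ≠ ⊥ ∧ LSet P x y = {⊥}}

/-- The zero-divisor graph `Γ(P)` on `Z(P)^×`. -/
def zdGraph (P : Type*) [PartialOrder P] [OrderBot P] : SimpleGraph (ZDivX P) where
  Adj a b := (a : P) ≠ (b : P) ∧ LSet P a b = {⊥}
  symm := by
    refine ⟨?_⟩
    rintro a b ⟨h1, h2⟩
    exact ⟨fun h => h1 h.symm, by rw [LSet_comm]; exact h2⟩
  loopless := by refine ⟨?_⟩; rintro a ⟨h1, _⟩; exact h1 rfl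

/-- The equivalence `x ∼ y ↔ ann(x) = ann(y)` on `Z(P)^×`. -/
def annSetoid (P : Type*) [PartialOrder P] [OrderBot P] : Setoid (ZDivX P) where
  r a b := ann P a = ann P b
  iseqv := ⟨fun _ => rfl, Eq.symm, Eq.trans⟩

/-- The reduced zero-divisor graph `Γ_E(P)`, on equivalence classes of `Z(P)^×`. -/
def redGraph (P : Type*) [PartialOrder P] [OrderBot P] :
    SimpleGraph (Quotient (annSetoid P)) where
  Adj := Quotient.lift₂ (fun a b => LSet P (a : P) (b : P) = {⊥}) (by
    intro a b a' b' ha hb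
    have ha' : ann P (a : P) = ann P (a' : P) := ha
    have hb' : ann P (b : P) = ann P (b' : P) := hb
    apply propext
    constructor
    · intro h
      have h1 : (b : P) ∈ ann P (a : P) := h
      rw [ha', mem_ann_comm, hb', mem_ann_comm] at h1
      exact h1
    · intro h
      have h1 : (b' : P) ∈ ann P (a' : P) := h
      rw [← ha', mem_ann_comm, ← hb', mem_ann_comm] at h1
      exact h1)
  symm := by
    refine ⟨?_⟩
    intro x y
    refine Quotient.inductionOn₂ x y ?_
    intro a b h
    have h' : LSet P (a : P) (b : P) = {⊥} := h
    show LSet P (b : P) (a : P) = {⊥}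
    rw [LSet_comm]; exact h'
  loopless := by
    refine ⟨?_⟩
    intro x
    refine Quotient.inductionOn x ?_
    intro a h
    have h' : LSet P (a : P) (a : P) = {⊥} := h
    have hm : (a : P) ∈ LSet P (a : P) (a : P) := ⟨le_refl _, le_refl _⟩
    rw [h'] at hm
    exact a.2.1 hm


section Aux
variable {P : Type*} [PartialOrder P] [OrderBot P]

lemma LSet_ne_bot_self (a : ZDivX P) : LSet P (a : P) (a : P) ≠ {⊥} := fun h => by
  have : (a : P) ∈ LSet P (a : P) (a : P) := ⟨le_rfl, le_rfl⟩
  rw [h] at this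
  exact a.2.1 this

lemma ne_of_LSet {a b : ZDivX P} (h : LSet P (a : P) (b : P) = {⊥}) : (a : P) ≠ (b : P) := by
  intro he
  exact LSet_ne_bot_self a (by rw [he] at h ⊢; exact h)

lemma zd_adj_of_LSet {a b : ZDivX P} (h : LSet P (a : P) (b : P) = {⊥}) :
    (zdGraph P).Adj a b := ⟨ne_of_LSet h, h⟩

lemma red_adj_iff (a b : ZDivX P) :
    (redGraph P).Adj (Quotient.mk (annSetoid P) a) (Quotient.mk (annSetoid P) b) ↔
      LSet P (a : P) (b : P) = {⊥} := Iff.rfl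

/-- lift a walk in the reduced graph to a walk in the zero-divisor graph -/
lemma lift_walk : ∀ {c d : Quotient (annSetoid P)} (W : (redGraph P).Walk c d)
    (a b : ZDivX P), Quotient.mk (annSetoid P) a = c → Quotient.mk (annSetoid P) b = d →
    c ≠ d → ∃ W' : (zdGraph P).Walk a b, W'.length ≤ W.length := by
  intro c d W
  induction W with
  | nil => intro a b ha hb hcd; exact absurd rfl hcd
  | @cons c v d h W ih =>
    intro a b ha hb hcd
    by_cases hvd : v = d
    · subst ha; subst hvd; subst hb
      have hL : LSet P (a : P) (b : P) = {⊥} := (red_adj_iff a b).1 h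
      exact ⟨SimpleGraph.Walk.cons (zd_adj_of_LSet hL) SimpleGraph.Walk.nil, by
        simp [SimpleGraph.Walk.length_cons]⟩
    · obtain ⟨x, hx⟩ := Quotient.exists_rep v
      subst ha
      have hL : LSet P (a : P) (x : P) = {⊥} := (red_adj_iff a x).1 (by rw [hx]; exact h)
      obtain ⟨W', hW'⟩ := ih x b hx hb hvd
      exact ⟨SimpleGraph.Walk.cons (zd_adj_of_LSet hL) W', by
        simp only [SimpleGraph.Walk.length_cons]; omega⟩

/-- the quotient map as a graph homomorphism -/
def quotHom : zdGraph P →g redGraph P where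
  toFun a := Quotient.mk (annSetoid P) a
  map_rel' := fun h => h.2

lemma red_edist_le_edist (a b : ZDivX P) :
    (redGraph P).edist (Quotient.mk (annSetoid P) a) (Quotient.mk (annSetoid P) b) ≤
      (zdGraph P).edist a b := by
  rcases eq_or_ne ((zdGraph P).edist a b) ⊤ with h | h
  · rw [h]; exact le_top
  · obtain ⟨p, hp⟩ := SimpleGraph.exists_walk_of_edist_ne_top h
    calc (redGraph P).edist _ _ ≤ ((p.map quotHom).length : ℕ∞) := SimpleGraph.edist_le _
    _ = (p.length : ℕ∞) := by rw [SimpleGraph.Walk.length_map]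
    _ = (zdGraph P).edist a b := hp

lemma edist_le_red_edist (a b : ZDivX P)
    (hne : Quotient.mk (annSetoid P) a ≠ Quotient.mk (annSetoid P) b) :
    (zdGraph P).edist a b ≤
      (redGraph P).edist (Quotient.mk (annSetoid P) a) (Quotient.mk (annSetoid P) b) := by
  rcases eq_or_ne ((redGraph P).edist (Quotient.mk (annSetoid P) a)
      (Quotient.mk (annSetoid P) b)) ⊤ with h | h
  · rw [h]; exact le_top
  · obtain ⟨p, hp⟩ := SimpleGraph.exists_walk_of_edist_ne_top h
    obtain ⟨W', hW'⟩ := lift_walk p a b rfl rfl hne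
    calc (zdGraph P).edist a b ≤ (W'.length : ℕ∞) := SimpleGraph.edist_le _
    _ ≤ (p.length : ℕ∞) := by exact_mod_cast hW'
    _ = _ := hp

lemma edist_le_two_of_same_class (a b : ZDivX P)
    (h : Quotient.mk (annSetoid P) a = Quotient.mk (annSetoid P) b) :
    (zdGraph P).edist a b ≤ 2 := by
  have hann : ann P (a : P) = ann P (b : P) := Quotient.exact h
  obtain ⟨y, hy0, hyL⟩ := a.2.2
  have hyZ : y ∈ ZDivX P := ⟨hy0, ⟨a, a.2.1, by rw [LSet_comm]; exact hyL⟩⟩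
  have hyb : LSet P (b : P) y = {⊥} := by
    have : y ∈ ann P (a : P) := hyL
    rw [hann] at this; exact this
  have h1 : (zdGraph P).Adj a ⟨y, hyZ⟩ := zd_adj_of_LSet hyL
  have h2 : (zdGraph P).Adj ⟨y, hyZ⟩ b :=
    zd_adj_of_LSet (by rw [LSet_comm]; exact hyb)
  have := SimpleGraph.edist_le
    (SimpleGraph.Walk.cons h1 (SimpleGraph.Walk.cons h2 SimpleGraph.Walk.nil))
  simpa using this

lemma ediam_le_max : (zdGraph P).ediam ≤ max (redGraph P).ediam 2 := by
  apply SimpleGraph.ediam_le_of_edist_le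
  intro a b
  rcases eq_or_ne (Quotient.mk (annSetoid P) a) (Quotient.mk (annSetoid P) b) with h | h
  · exact le_max_of_le_right (edist_le_two_of_same_class a b h)
  · exact le_max_of_le_left ((edist_le_red_edist a b h).trans SimpleGraph.edist_le_ediam)

lemma red_ediam_le : (redGraph P).ediam ≤ (zdGraph P).ediam := by
  apply SimpleGraph.ediam_le_of_edist_le
  intro c d
  obtain ⟨a, rfl⟩ := Quotient.exists_rep c
  obtain ⟨b, rfl⟩ := Quotient.exists_rep d
  exact (red_edist_le_edist a b).trans SimpleGraph.edist_le_ediam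

end Aux

/-- `diam Γ_E(P) = 3` if and only if `diam Γ(P) = 3`. -/
theorem stmt1 (P : Type*) [PartialOrder P] [OrderBot P] (hZ : (ZDivX P).Nonempty) :
    (redGraph P).ediam = 3 ↔ (zdGraph P).ediam = 3 := by
  constructor
  · intro h
    refine le_antisymm ?_ ?_
    · refine (ediam_le_max).trans ?_
      rw [h]
      exact max_le le_rfl (by norm_num)
    · rw [← h]; exact red_ediam_le
  · intro h
    refine le_antisymm ?_ ?_
    · rw [← h]; exact red_ediam_le
    · have := ediam_le_max (P := P)
      rw [h] at this
      rcases le_max_iff.1 this with h' | h'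
      · exact h'
      · exact absurd h' (by norm_num)
end

section
/- Let P be a poset with least element 0 and Z(P)^× ≠ ∅, and let r ≥ 2. Then the reduced zero-divisor graph Γ_E(P) is a complete r-partite graph if and only if it is a complete graph with r vertices. -/
/-- For `r ≥ 2`, `Γ_E(P)` is a complete `r`-partite graph iff it is a complete graph
with `r` vertices. -/
theorem stmt6 (P : Type*) [PartialOrder P] [OrderBot P] (hZ : (ZDivX P).Nonempty)
    (r : ℕ) (hr : 2 ≤ r) :
    (∃ f : Quotient (annSetoid P) → Fin r, Function.Surjective f ∧
        ∀ u v : Quotient (annSetoid P), (redGraph P).Adj u v ↔ f u ≠ f v) ↔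
      Nonempty (redGraph P ≃g (⊤ : SimpleGraph (Fin r))) := by
  constructor
  · rintro ⟨f, hsurj, hadj⟩
    -- key: a `z` in `ann a \ ann b` with `f ⟦a⟧ = f ⟦b⟧` gives a contradiction
    have key : ∀ (a b : ZDivX P) (z : P), z ∈ ann P (a : P) → z ∉ ann P (b : P) →
        f ⟦a⟧ = f ⟦b⟧ → False := by
      intro a b z hza hzb hfab
      have hz0 : z ≠ ⊥ := by
        rintro rfl
        apply hzb
        show LSet P (b : P) ⊥ = {⊥}
        ext w
        simp only [LSet, Set.mem_setOf_eq, Set.mem_singleton_iff, le_bot_iff]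
        exact ⟨fun h => h.2, fun h => ⟨h ▸ bot_le, h⟩⟩
      have hLaz : LSet P (a : P) z = {⊥} := hza
      have hzZ : z ∈ ZDivX P := ⟨hz0, a, a.2.1, by rw [LSet_comm]; exact hLaz⟩
      set zv : ZDivX P := ⟨z, hzZ⟩
      have hadj1 : (redGraph P).Adj ⟦zv⟧ ⟦a⟧ := by
        show LSet P z (a : P) = {⊥}
        rw [LSet_comm]; exact hLaz
      have h1 : f ⟦zv⟧ ≠ f ⟦a⟧ := (hadj _ _).mp hadj1
      have h2 : (redGraph P).Adj ⟦zv⟧ ⟦b⟧ := (hadj _ _).mpr (hfab ▸ h1)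
      apply hzb
      show LSet P (b : P) z = {⊥}
      rw [LSet_comm]; exact h2
    have hinj : Function.Injective f := by
      intro u v hfe
      by_contra hne
      obtain ⟨a, rfl⟩ := Quotient.exists_rep u
      obtain ⟨b, rfl⟩ := Quotient.exists_rep v
      have hann : ann P (a : P) ≠ ann P (b : P) := fun h => hne (Quotient.sound h)
      rcases Set.not_subset.mp (fun hs => hann (Set.Subset.antisymm hs (by
          by_contra hs'
          obtain ⟨z, hzb, hza⟩ := Set.not_subset.mp hs'
          exact key b a z hzb hza hfe.symm))) with ⟨z, hza, hzb⟩
      exact key a b z hza hzb hfe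
    exact ⟨{ toEquiv := Equiv.ofBijective f ⟨hinj, hsurj⟩,
             map_rel_iff' := by
               intro u v
               simp only [Equiv.ofBijective_apply, SimpleGraph.top_adj]
               exact (hadj u v).symm }⟩
  · rintro ⟨e⟩
    refine ⟨e, e.toEquiv.surjective, fun u v => ?_⟩
    rw [← e.map_rel_iff]
    simp [SimpleGraph.top_adj]
end

section
/- Let P be a poset with least element 0 and Z(P)^× ≠ ∅ such that the reduced zero-divisor graph Γ_E(P) has finitely many vertices. Then every vertex of maximal degree in Γ_E(P) is an annihilator prime ideal of P; that is, if x ∈ Z(P)^× satisfies deg([x]) ≥ deg([y]) for all vertices [y] of Γ_E(P), then ann(x) is an annihilator prime ideal of P (equivalently, a maximal element of 𝔄 := {ann(w) : w ∈ P\{0}} under inclusion). -/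
/-- `I` is an ideal of the poset `P`: a nonempty downward-closed subset. -/
def IsIdeal (P : Type*) [PartialOrder P] [OrderBot P] (I : Set P) : Prop :=
  I.Nonempty ∧ ∀ x ∈ I, ∀ y : P, y ≤ x → y ∈ I

/-- `I` is a prime ideal of the poset `P`: a proper ideal such that
`L(x,y) ⊆ I` implies `x ∈ I` or `y ∈ I`. -/
def IsPrimeIdeal (P : Type*) [PartialOrder P] [OrderBot P] (I : Set P) : Prop :=
  IsIdeal P I ∧ I ≠ Set.univ ∧ ∀ x y : P, LSet P x y ⊆ I → x ∈ I ∨ y ∈ I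

/-- The family `𝔄 = {ann(x) : x ∈ P \ {0}}`. -/
def AnnFam (P : Type*) [PartialOrder P] [OrderBot P] : Set (Set P) :=
  {I | ∃ x : P, x ≠ ⊥ ∧ ann P x = I}

/-- `Ann(P)`, the set of annihilator prime ideals of `P`. -/
def AnnPrimes (P : Type*) [PartialOrder P] [OrderBot P] : Set (Set P) :=
  {I | IsPrimeIdeal P I ∧ ∃ x : P, ann P x = I}

/-- `P` satisfies the ACC for annihilators: every nonempty subfamily of `𝔄` has a
maximal element. -/
def ACCAnn (P : Type*) [PartialOrder P] [OrderBot P] : Prop :=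
  ∀ S : Set (Set P), S ⊆ AnnFam P → S.Nonempty → ∃ I ∈ S, ∀ J ∈ S, I ⊆ J → I = J

lemma lset_eq_bot_iff (P : Type*) [PartialOrder P] [OrderBot P] (x y : P) :
    LSet P x y = {⊥} ↔ ∀ z : P, z ≤ x → z ≤ y → z = ⊥ := by
  constructor
  · intro h z hx hy
    have : z ∈ LSet P x y := ⟨hx, hy⟩
    rw [h] at this; exact this
  · intro h
    ext z
    simp only [LSet, Set.mem_setOf_eq, Set.mem_singleton_iff]
    constructor
    · rintro ⟨hx, hy⟩; exact h z hx hy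
    · rintro rfl; exact ⟨bot_le, bot_le⟩

lemma bot_mem_ann (P : Type*) [PartialOrder P] [OrderBot P] (x : P) : ⊥ ∈ ann P x := by
  show LSet P x ⊥ = {⊥}
  rw [lset_eq_bot_iff]; exact fun z _ hz => le_bot_iff.mp hz

lemma ann_mono (P : Type*) [PartialOrder P] [OrderBot P] {x y : P} (h : y ≤ x) :
    ann P x ⊆ ann P y := by
  intro z hz
  have hz' : LSet P x z = {⊥} := hz
  show LSet P y z = {⊥}
  rw [lset_eq_bot_iff] at hz' ⊢
  exact fun w hw1 hw2 => hz' w (hw1.trans h) hw2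

lemma not_self_mem_ann (P : Type*) [PartialOrder P] [OrderBot P] {x : P} (hx : x ≠ ⊥) :
    x ∉ ann P x := by
  intro h
  exact hx ((lset_eq_bot_iff P x x).mp h x le_rfl le_rfl)

/-- If `Γ_E(P)` has finitely many vertices, then every vertex of maximal degree in
`Γ_E(P)` is an annihilator prime ideal, i.e. a maximal element of `𝔄`. -/
theorem stmt18 (P : Type*) [PartialOrder P] [OrderBot P] (hZ : (ZDivX P).Nonempty)
    (hfin : Finite (Quotient (annSetoid P))) (x : ZDivX P)
    (hmax : ∀ y : ZDivX P,
      ((redGraph P).neighborSet (Quotient.mk (annSetoid P) y)).ncard ≤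
        ((redGraph P).neighborSet (Quotient.mk (annSetoid P) x)).ncard) :
    IsPrimeIdeal P (ann P (x : P)) ∧
      ∀ J ∈ AnnFam P, ann P (x : P) ⊆ J → ann P (x : P) = J := by
  obtain ⟨hx0, y0, hy0, hxy0⟩ := x.2
  -- maximality first
  have hmaxJ : ∀ J ∈ AnnFam P, ann P (x : P) ⊆ J → ann P (x : P) = J := by
    rintro J ⟨w, hw, rfl⟩ hsub
    by_contra hne
    obtain ⟨u, huw, hux⟩ : ∃ u, u ∈ ann P w ∧ u ∉ ann P (x : P) := by
      by_contra h
      push_neg at h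
      exact hne (Set.Subset.antisymm hsub h)
    have hu0 : u ≠ ⊥ := fun h => hux (h ▸ bot_mem_ann P (x : P))
    have hy0w : y0 ∈ ann P w := hsub hxy0
    have hWZ : w ∈ ZDivX P := ⟨hw, y0, hy0, hy0w⟩
    have hUZ : u ∈ ZDivX P := ⟨hu0, w, hw, by rw [LSet_comm]; exact huw⟩
    set W : ZDivX P := ⟨w, hWZ⟩
    set U : ZDivX P := ⟨u, hUZ⟩
    have hss : (redGraph P).neighborSet (Quotient.mk (annSetoid P) x) ⊂
        (redGraph P).neighborSet (Quotient.mk (annSetoid P) W) := by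
      constructor
      · intro p hp
        refine Quotient.inductionOn p (fun b hb => ?_) hp
        have hb' : LSet P (x : P) (b : P) = {⊥} := hb
        exact hsub hb'
      · intro h
        have hUW : Quotient.mk (annSetoid P) U ∈
            (redGraph P).neighborSet (Quotient.mk (annSetoid P) W) := by
          show LSet P w u = {⊥}
          exact huw
        have hUx := h hUW
        have : LSet P (x : P) u = {⊥} := hUx
        exact hux this
    have hlt := Set.ncard_lt_ncard hss (Set.toFinite _)
    exact absurd (hmax W) (not_le.mpr hlt)
  refine ⟨⟨⟨⟨⊥, bot_mem_ann P (x : P)⟩, ?_⟩, ?_, ?_⟩, hmaxJ⟩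
  · -- downward closed
    intro a ha b hba
    have ha' : LSet P (x : P) a = {⊥} := ha
    show LSet P (x : P) b = {⊥}
    rw [lset_eq_bot_iff] at ha' ⊢
    exact fun z hz1 hz2 => ha' z hz1 (hz2.trans hba)
  · -- proper
    intro h
    exact not_self_mem_ann P hx0 (h ▸ Set.mem_univ (x : P))
  · -- prime
    intro a b hab
    by_cases ha : a ∈ ann P (x : P)
    · exact Or.inl ha
    · right
      have hna : ¬ LSet P (x : P) a = {⊥} := ha
      rw [lset_eq_bot_iff] at hna
      push_neg at hna
      obtain ⟨c, hcx, hca, hc0⟩ := hna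
      have hsubc : ann P (x : P) ⊆ ann P c := ann_mono P hcx
      have heq : ann P (x : P) = ann P c := hmaxJ _ ⟨c, hc0, rfl⟩ hsubc
      have hbc : b ∈ ann P c := by
        show LSet P c b = {⊥}
        rw [lset_eq_bot_iff]
        intro z hzc hzb
        have hzann : z ∈ ann P (x : P) := hab ⟨hzc.trans hca, hzb⟩
        have : LSet P (x : P) z = {⊥} := hzann
        exact (lset_eq_bot_iff P (x : P) z).mp this z (hzc.trans hcx) le_rfl
      rw [heq]
      exact hbc
end
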